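/- Suppose the data (x,u) satisfy the standing data assumptions, let δ > 0 be such that T/δ is a positive integer, and let L ≥ 0. Suppose there exist K ∈ ℝ^{m×n}, a symmetric positive definite P ∈ ℝ^{n×n}, and β > (1/2)δTL such that the sampled-data LMI at stepsize δ holds. Then (A+BK)P + P(A+BK)^T is negative definite for every (A,B) ∈ Σ(Q) ∩ M^L_{x,u}, and also for every (A,B) ∈ Σ(Q) ∩ N^L_{x,u}. -/

import Mathlib

open MeasureTheory Matrix

noncomputable def opNorm {ι κ : Type} [Fintype ι] [Fintype κ] [DecidableEq κ]
    (M : Matrix ι κ ℝ) : ℝ :=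
  ‖LinearMap.toContinuousLinearMap (Matrix.toEuclideanLin M)‖

noncomputable def euclNorm {ι : Type} [Fintype ι] (v : ι → ℝ) : ℝ :=
  Real.sqrt (∑ i, v i ^ 2)

/-- `v` is `L`-square Lipschitz on `[0,T]`. -/
def SqLipschitz {ι : Type} [Fintype ι] [DecidableEq ι] (T L : ℝ) (v : ℝ → ι → ℝ) : Prop :=
  ∀ t₁ ∈ Set.Icc (0:ℝ) T, ∀ t₂ ∈ Set.Icc (0:ℝ) T,
    opNorm (Matrix.vecMulVec (v t₁) (v t₁) - Matrix.vecMulVec (v t₂) (v t₂)) ≤ L * |t₁ - t₂|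

/-- The set of all partition sums appearing in the definition of total square variation. -/
def partitionSums {ι : Type} [Fintype ι] [DecidableEq ι] (T : ℝ) (v : ℝ → ι → ℝ) : Set ℝ :=
  { s | ∃ (N : ℕ) (t : Fin (N + 1) → ℝ), Monotone t ∧ t 0 = 0 ∧ t (Fin.last N) = T ∧
      s = ∑ i : Fin N, opNorm (Matrix.vecMulVec (v (t i.succ)) (v (t i.succ)) -
            Matrix.vecMulVec (v (t i.castSucc)) (v (t i.castSucc))) }

/-- Total square variation `V_0^T(v)`. -/
noncomputable def totalSqVar {ι : Type} [Fintype ι] [DecidableEq ι] (T : ℝ) (v : ℝ → ι → ℝ) : ℝ :=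
  sSup (partitionSums T v)

/-- `V_0^T(v) ≤ c`, phrased via all partition sums. -/
def TotalSqVarLE {ι : Type} [Fintype ι] [DecidableEq ι] (T : ℝ) (v : ℝ → ι → ℝ) (c : ℝ) : Prop :=
  ∀ s ∈ partitionSums T v, s ≤ c

/-- Loewner order `M ≤ N`. -/
def loewnerLE {ι : Type} [Fintype ι] (M N : Matrix ι ι ℝ) : Prop := (N - M).PosSemidef

/-- Strict Loewner order `M < N`. -/
def loewnerLT {ι : Type} [Fintype ι] (M N : Matrix ι ι ℝ) : Prop := (N - M).PosDef

/-- `M` is negative definite. -/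
def negDefQ {ι : Type} [Fintype ι] (M : Matrix ι ι ℝ) : Prop := (-M).PosDef

/-- Entrywise Lebesgue integral of a matrix-valued function on `[0,T]`. -/
noncomputable def matIntegral {ι κ : Type} (T : ℝ) (f : ℝ → Matrix ι κ ℝ) : Matrix ι κ ℝ :=
  Matrix.of fun i j => ∫ t in Set.Ioc (0:ℝ) T, f t i j

/-- `δ • Σ_{k<N} v(kδ) v(kδ)ᵀ`. -/
noncomputable def sampledGram {ι : Type} [Fintype ι] (δ : ℝ) (N : ℕ) (v : ℝ → ι → ℝ) :
    Matrix ι ι ℝ :=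
  δ • ∑ k ∈ Finset.range N, Matrix.vecMulVec (v (k * δ)) (v (k * δ))

/-- The noise signal `ẋ − Ax − Bu` associated with a candidate system `(A,B)`. -/
def noiseSig {n m : ℕ} (xdot x : ℝ → Fin n → ℝ) (u : ℝ → Fin m → ℝ)
    (A : Matrix (Fin n) (Fin n) ℝ) (B : Matrix (Fin n) (Fin m) ℝ) : ℝ → Fin n → ℝ :=
  fun t => xdot t - A.mulVec (x t) - B.mulVec (u t)

/-- `Σ(Q')`: systems consistent with the continuous-time data. -/
def SigmaCont {n m : ℕ} (T : ℝ) (xdot x : ℝ → Fin n → ℝ) (u : ℝ → Fin m → ℝ)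
    (Q' : Matrix (Fin n) (Fin n) ℝ) :
    Set (Matrix (Fin n) (Fin n) ℝ × Matrix (Fin n) (Fin m) ℝ) :=
  { AB | loewnerLE (matIntegral T fun t =>
      Matrix.vecMulVec (noiseSig xdot x u AB.1 AB.2 t) (noiseSig xdot x u AB.1 AB.2 t)) Q' }

/-- `Σ^δ(Q')`: systems consistent with the data sampled at stepsize `δ` (with `N = T/δ` samples). -/
def SigmaDisc {n m : ℕ} (δ : ℝ) (N : ℕ) (xdot x : ℝ → Fin n → ℝ) (u : ℝ → Fin m → ℝ)
    (Q' : Matrix (Fin n) (Fin n) ℝ) :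
    Set (Matrix (Fin n) (Fin n) ℝ × Matrix (Fin n) (Fin m) ℝ) :=
  { AB | loewnerLE (sampledGram δ N (noiseSig xdot x u AB.1 AB.2)) Q' }

/-- `M^L_{x,u}`: systems whose associated noise is `L`-square Lipschitz. -/
def Mset {n m : ℕ} (T L : ℝ) (xdot x : ℝ → Fin n → ℝ) (u : ℝ → Fin m → ℝ) :
    Set (Matrix (Fin n) (Fin n) ℝ × Matrix (Fin n) (Fin m) ℝ) :=
  { AB | SqLipschitz T L (noiseSig xdot x u AB.1 AB.2) }

/-- `N^L_{x,u}`: systems whose associated noise has total square variation at most `LT/2`. -/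
def Nset {n m : ℕ} (T L : ℝ) (xdot x : ℝ → Fin n → ℝ) (u : ℝ → Fin m → ℝ) :
    Set (Matrix (Fin n) (Fin n) ℝ × Matrix (Fin n) (Fin m) ℝ) :=
  { AB | TotalSqVarLE T (noiseSig xdot x u AB.1 AB.2) (L * T / 2) }

/-- The stacked signal `ξ(t) = (ẋ(t); −x(t); −u(t))`. -/
def xiSig {n m : ℕ} (xdot x : ℝ → Fin n → ℝ) (u : ℝ → Fin m → ℝ) (t : ℝ) :
    (Fin n ⊕ (Fin n ⊕ Fin m)) → ℝ :=
  Sum.elim (xdot t) (Sum.elim (fun i => -(x t i)) (fun j => -(u t j)))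

/-- The block matrix `[[Q + βI, P, PKᵀ], [P, 0, 0], [KP, 0, 0]]`. -/
noncomputable def lmiBlock {n m : ℕ} (Q P : Matrix (Fin n) (Fin n) ℝ)
    (K : Matrix (Fin m) (Fin n) ℝ) (β : ℝ) :
    Matrix (Fin n ⊕ (Fin n ⊕ Fin m)) (Fin n ⊕ (Fin n ⊕ Fin m)) ℝ :=
  Matrix.fromBlocks (Q + β • (1 : Matrix (Fin n) (Fin n) ℝ))
    (Matrix.of fun i jj => Sum.elim (fun j => P i j) (fun j => (P * K.transpose) i j) jj)
    (Matrix.of fun ii j => Sum.elim (fun i => P i j) (fun k => (K * P) k j) ii)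
    0

/-- The continuous-data LMI. -/
def ContLMI {n m : ℕ} (T : ℝ) (xdot x : ℝ → Fin n → ℝ) (u : ℝ → Fin m → ℝ)
    (Q P : Matrix (Fin n) (Fin n) ℝ) (K : Matrix (Fin m) (Fin n) ℝ) (β : ℝ) : Prop :=
  (matIntegral T (fun t => Matrix.vecMulVec (xiSig xdot x u t) (xiSig xdot x u t)) -
    lmiBlock Q P K β).PosSemidef

/-- The sampled-data LMI at stepsize `δ` (with `N = T/δ` samples). -/
def SampLMI {n m : ℕ} (δ : ℝ) (N : ℕ) (xdot x : ℝ → Fin n → ℝ) (u : ℝ → Fin m → ℝ)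
    (Q P : Matrix (Fin n) (Fin n) ℝ) (K : Matrix (Fin m) (Fin n) ℝ) (β : ℝ) : Prop :=
  (sampledGram δ N (xiSig xdot x u) - lmiBlock Q P K β).PosSemidef


set_option linter.unusedSectionVars false

section LinAlg
variable {ι : Type} [Fintype ι] [DecidableEq ι]

lemma quad_le_opNorm (M : Matrix ι ι ℝ) (z : ι → ℝ) :
    z ⬝ᵥ M.mulVec z ≤ opNorm M * ∑ i, z i ^ 2 := by
  classical
  set z' : EuclideanSpace ℝ ι := (WithLp.equiv 2 (ι → ℝ)).symm z with hz'
  have hzn : ‖z'‖ ^ 2 = ∑ i, z i ^ 2 := by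
    rw [EuclideanSpace.norm_eq, Real.sq_sqrt (by positivity)]
    simp [z', WithLp.equiv_symm_apply, sq_abs]
  have h1 : z ⬝ᵥ M.mulVec z =
      inner ℝ ((LinearMap.toContinuousLinearMap (Matrix.toEuclideanLin M)) z') z' := by
    rw [real_inner_comm]
    simp only [LinearMap.coe_toContinuousLinearMap', PiLp.inner_apply, RCLike.inner_apply,
      starRingEnd_apply]
    simp [Matrix.toEuclideanLin_apply, dotProduct, z', WithLp.equiv_symm_apply, mul_comm]
  rw [h1, ← hzn]
  calc inner ℝ ((LinearMap.toContinuousLinearMap (Matrix.toEuclideanLin M)) z') z'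
      ≤ ‖(LinearMap.toContinuousLinearMap (Matrix.toEuclideanLin M)) z'‖ * ‖z'‖ :=
        real_inner_le_norm _ _
    _ ≤ (opNorm M * ‖z'‖) * ‖z'‖ := by
        gcongr
        exact ContinuousLinearMap.le_opNorm _ _
    _ = opNorm M * ‖z'‖ ^ 2 := by ring

lemma dot_vecMulVec (a b z : ι → ℝ) :
    z ⬝ᵥ (Matrix.vecMulVec a b).mulVec z = (a ⬝ᵥ z) * (b ⬝ᵥ z) := by
  simp only [dotProduct, Matrix.mulVec, Matrix.vecMulVec_apply, dotProduct]
  rw [Finset.sum_mul_sum]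
  congr 1; ext i; rw [Finset.mul_sum]; congr 1; ext j; ring

lemma sq_diff_le (v : ℝ → ι → ℝ) (z : ι → ℝ) (t₁ t₂ : ℝ) :
    (v t₁ ⬝ᵥ z) ^ 2 - (v t₂ ⬝ᵥ z) ^ 2 ≤
      opNorm (Matrix.vecMulVec (v t₁) (v t₁) - Matrix.vecMulVec (v t₂) (v t₂)) *
        ∑ i, z i ^ 2 := by
  have := quad_le_opNorm (Matrix.vecMulVec (v t₁) (v t₁) - Matrix.vecMulVec (v t₂) (v t₂)) z
  rwa [Matrix.sub_mulVec, dotProduct_sub, dot_vecMulVec, dot_vecMulVec, ← sq, ← sq] at this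

lemma gram_quad (δ : ℝ) (N : ℕ) (v : ℝ → ι → ℝ) (z : ι → ℝ) :
    z ⬝ᵥ (sampledGram δ N v).mulVec z = δ * ∑ k ∈ Finset.range N, (v (k * δ) ⬝ᵥ z) ^ 2 := by
  simp only [sampledGram, Matrix.smul_mulVec, dotProduct_smul]
  rw [smul_eq_mul]
  congr 1
  induction N with
  | zero => simp
  | succ N ih =>
    rw [Finset.sum_range_succ, Finset.sum_range_succ, Matrix.add_mulVec, dotProduct_add, ih,
      dot_vecMulVec, sq]

end LinAlg

lemma sum_range_two_mul (h : ℕ → ℝ) (N : ℕ) :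
    ∑ j ∈ Finset.range (2 * N), h j = ∑ k ∈ Finset.range N, (h (2 * k) + h (2 * k + 1)) := by
  induction N with
  | zero => simp
  | succ N ih =>
    rw [Finset.sum_range_succ, ← ih, Nat.mul_succ, Finset.sum_range_succ, Finset.sum_range_succ]
    ring_nf

/-- Any monotone chain from `0` to `T` gives a partition sum bounded by `c`. -/
lemma chain_bound {ι : Type} [Fintype ι] [DecidableEq ι] {T c : ℝ} {v : ℝ → ι → ℝ}
    (hv : TotalSqVarLE T v c) (M : ℕ) (p : ℕ → ℝ) (hmono : Monotone p)
    (h0 : p 0 = 0) (hM : p M = T) :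
    ∑ j ∈ Finset.range M, opNorm (Matrix.vecMulVec (v (p (j + 1))) (v (p (j + 1))) -
      Matrix.vecMulVec (v (p j)) (v (p j))) ≤ c := by
  apply hv
  refine ⟨M, fun i => p i, fun i j hij => hmono (by exact_mod_cast hij), by simpa using h0,
    by simpa using hM, ?_⟩
  rw [Finset.sum_range fun j => opNorm (Matrix.vecMulVec (v (p (j + 1))) (v (p (j + 1))) -
      Matrix.vecMulVec (v (p j)) (v (p j)))]
  congr 1

section Nsup
variable {ι : Type} [Fintype ι] [DecidableEq ι]

/-- pointwise bound on the square increment from total square variation. -/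
lemma g_le_of_tsv {T c : ℝ} {v : ℝ → ι → ℝ} (hv : TotalSqVarLE T v c)
    {a t : ℝ} (ha : 0 ≤ a) (hat : a ≤ t) (htT : t ≤ T) :
    opNorm (Matrix.vecMulVec (v t) (v t) - Matrix.vecMulVec (v a) (v a)) ≤ c := by
  set p : ℕ → ℝ := fun j => if j = 0 then 0 else if j = 1 then a else if j = 2 then t else T
    with hp
  have hmono : Monotone p := by
    apply monotone_nat_of_le_succ
    intro j
    rcases j with _ | _ | _ | j <;> simp [hp] <;> linarith
  have := chain_bound hv 3 p hmono (by simp [hp]) (by simp [hp])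
  rw [Finset.sum_range_succ, Finset.sum_range_succ, Finset.sum_range_one] at this
  have hp1 : p 1 = a := by simp [hp]
  have hp2 : p 2 = t := by simp [hp]
  rw [hp1, hp2] at this
  have h0 : (0:ℝ) ≤ opNorm (Matrix.vecMulVec (v a) (v a) -
      Matrix.vecMulVec (v (p 0)) (v (p 0))) := norm_nonneg _
  have h2 : (0:ℝ) ≤ opNorm (Matrix.vecMulVec (v (p (2 + 1))) (v (p (2 + 1))) -
      Matrix.vecMulVec (v t) (v t)) := norm_nonneg _
  linarith

end Nsup

section Nsup2
variable {ι : Type} [Fintype ι] [DecidableEq ι]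

lemma sup_sum_le {T δ L : ℝ} (hδ : 0 < δ) {N : ℕ} (hN : 0 < N) (hTN : T = N * δ)
    {v : ℝ → ι → ℝ} (hv : TotalSqVarLE T v (L * T / 2)) :
    ∑ k ∈ Finset.range N, sSup ((fun t => opNorm (Matrix.vecMulVec (v t) (v t) -
        Matrix.vecMulVec (v ((k : ℝ) * δ)) (v ((k : ℝ) * δ)))) ''
          Set.Icc ((k : ℝ) * δ) (((k : ℝ) + 1) * δ)) ≤ L * T / 2 := by
  classical
  set g : ℕ → ℝ → ℝ := fun k t => opNorm (Matrix.vecMulVec (v t) (v t) -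
    Matrix.vecMulVec (v ((k : ℝ) * δ)) (v ((k : ℝ) * δ))) with hg
  set S : ℕ → ℝ := fun k => sSup (g k '' Set.Icc ((k : ℝ) * δ) (((k : ℝ) + 1) * δ)) with hS
  have hpt : ∀ k : ℕ, k < N → ∀ t ∈ Set.Icc ((k : ℝ) * δ) (((k : ℝ) + 1) * δ),
      g k t ≤ L * T / 2 := by
    intro k hk t ht
    have hk' : ((k : ℝ) + 1) ≤ (N : ℝ) := by exact_mod_cast Nat.succ_le_of_lt hk
    exact g_le_of_tsv hv (by positivity) ht.1
      (ht.2.trans (by rw [hTN]; nlinarith))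
  have hmem : ∀ k : ℕ, ((k : ℝ) * δ) ∈ Set.Icc ((k : ℝ) * δ) (((k : ℝ) + 1) * δ) :=
    fun k => ⟨le_refl _, by nlinarith [Nat.cast_nonneg (α := ℝ) k]⟩
  have hne : ∀ k : ℕ, (g k '' Set.Icc ((k : ℝ) * δ) (((k : ℝ) + 1) * δ)).Nonempty :=
    fun k => ⟨g k ((k : ℝ) * δ), Set.mem_image_of_mem _ (hmem k)⟩
  refine le_of_forall_pos_le_add ?_
  intro ε hε
  have hεN : 0 < ε / N := by positivity
  have hsel : ∀ k : ℕ, ∃ t, t ∈ Set.Icc ((k : ℝ) * δ) (((k : ℝ) + 1) * δ) ∧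
      (k < N → S k - ε / N < g k t) := by
    intro k
    by_cases hk : k < N
    · obtain ⟨b, hb, hlt⟩ := exists_lt_of_lt_csSup (hne k)
        (show S k - ε / N < S k by linarith)
      obtain ⟨t, ht, rfl⟩ := hb
      exact ⟨t, ht, fun _ => hlt⟩
    · exact ⟨(k : ℝ) * δ, hmem k, fun h => absurd h hk⟩
  choose tk htk hltk using hsel
  set p : ℕ → ℝ := fun j => if Even j then ((j / 2 : ℕ) : ℝ) * δ else tk (j / 2) with hp
  have hpe : ∀ a : ℕ, p (2 * a) = (a : ℝ) * δ := by
    intro a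
    have h1 : (2 * a) / 2 = a := by omega
    simp [hp, even_two_mul a, h1]
  have hpo : ∀ a : ℕ, p (2 * a + 1) = tk a := by
    intro a
    have h1 : (2 * a + 1) / 2 = a := by omega
    have h2 : ¬ Even (2 * a + 1) := by simp [Nat.even_add_one, even_two_mul a]
    simp [hp, h2, h1]
  have hmono : Monotone p := by
    apply monotone_nat_of_le_succ
    intro j
    rcases Nat.even_or_odd j with he | ho
    · obtain ⟨a, rfl⟩ := he
      have e1 : a + a = 2 * a := by ring
      rw [e1, hpe, hpo]
      exact (htk a).1
    · obtain ⟨a, rfl⟩ := ho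
      have e2 : 2 * a + 1 + 1 = 2 * (a + 1) := by ring
      rw [e2, hpo, hpe]
      have := (htk a).2
      push_cast
      linarith
  have h0 : p 0 = 0 := by
    have : (0 : ℕ) = 2 * 0 := rfl
    rw [this, hpe]; simp
  have hM : p (2 * N) = T := by rw [hpe, hTN]
  have hchain := chain_bound hv (2 * N) p hmono h0 hM
  rw [sum_range_two_mul] at hchain
  have hterm : ∀ k ∈ Finset.range N, S k - ε / N ≤
      opNorm (Matrix.vecMulVec (v (p (2 * k + 1))) (v (p (2 * k + 1))) -
        Matrix.vecMulVec (v (p (2 * k))) (v (p (2 * k)))) +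
      opNorm (Matrix.vecMulVec (v (p (2 * k + 1 + 1))) (v (p (2 * k + 1 + 1))) -
        Matrix.vecMulVec (v (p (2 * k + 1))) (v (p (2 * k + 1)))) := by
    intro k hk
    rw [Finset.mem_range] at hk
    have h1 : opNorm (Matrix.vecMulVec (v (p (2 * k + 1))) (v (p (2 * k + 1))) -
        Matrix.vecMulVec (v (p (2 * k))) (v (p (2 * k)))) = g k (tk k) := by
      rw [hpo, hpe]
    have h2 : (0:ℝ) ≤ opNorm (Matrix.vecMulVec (v (p (2 * k + 1 + 1))) (v (p (2 * k + 1 + 1))) -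
        Matrix.vecMulVec (v (p (2 * k + 1))) (v (p (2 * k + 1)))) := norm_nonneg _
    have h3 := hltk k hk
    rw [h1]
    linarith
  have hsum := Finset.sum_le_sum hterm
  rw [Finset.sum_sub_distrib, Finset.sum_const, Finset.card_range] at hsum
  have hNε : N • (ε / (N : ℝ)) = ε := by
    rw [nsmul_eq_mul]
    field_simp
  rw [hNε] at hsum
  linarith

section Integration

lemma integral_split {f : ℝ → ℝ} {δ T : ℝ} (hδ : 0 < δ) {N : ℕ} (hTN : T = N * δ)
    (hf : IntegrableOn f (Set.Ioc 0 T) volume) :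
    ∫ t in Set.Ioc (0:ℝ) T, f t =
      ∑ k ∈ Finset.range N, ∫ t in Set.Ioc ((k : ℝ) * δ) (((k : ℝ) + 1) * δ), f t := by
  have hsub : ∀ k : ℕ, k < N → Set.Ioc ((k : ℝ) * δ) (((k : ℝ) + 1) * δ) ⊆ Set.Ioc 0 T := by
    intro k hk
    have hk' : ((k : ℝ) + 1) ≤ (N : ℝ) := by exact_mod_cast Nat.succ_le_of_lt hk
    apply Set.Ioc_subset_Ioc
    · positivity
    · rw [hTN]; nlinarith
  have hint : ∀ k : ℕ, k < N →
      IntervalIntegrable f volume ((k : ℝ) * δ) (((k : ℝ) + 1) * δ) := by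
    intro k hk
    rw [intervalIntegrable_iff_integrableOn_Ioc_of_le (by nlinarith)]
    exact hf.mono_set (hsub k hk)
  have := intervalIntegral.sum_integral_adjacent_intervals (a := fun k => (k : ℝ) * δ)
    (n := N) (by intro k hk; push_cast; exact hint k hk)
  simp only [Nat.cast_zero, zero_mul] at this
  rw [← intervalIntegral.integral_of_le (by rw [hTN]; positivity), hTN] at *
  rw [← this]
  apply Finset.sum_congr rfl
  intro k hk
  have e : ((k + 1 : ℕ) : ℝ) * δ = ((k : ℝ) + 1) * δ := by push_cast; ring
  have h1 : ((k : ℝ)) * δ ≤ ((k : ℝ) + 1) * δ := by nlinarith [Nat.cast_nonneg (α := ℝ) k]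
  rw [e, intervalIntegral.integral_of_le h1]

lemma step_est {f φ : ℝ → ℝ} {a b : ℝ} (hab : a ≤ b)
    (hf : IntegrableOn f (Set.Ioc a b) volume) (hφ : IntegrableOn φ (Set.Ioc a b) volume)
    (hb : ∀ t ∈ Set.Ioc a b, f a - f t ≤ φ t) :
    (b - a) * f a - ∫ t in Set.Ioc a b, f t ≤ ∫ t in Set.Ioc a b, φ t := by
  have hconst : ∫ _ in Set.Ioc a b, f a = (b - a) * f a := by
    rw [setIntegral_const, Real.volume_real_Ioc_of_le hab, smul_eq_mul]
  have h1 : (b - a) * f a - ∫ t in Set.Ioc a b, f t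
      = ∫ t in Set.Ioc a b, (f a - f t) := by
    rw [integral_sub (show IntegrableOn (fun _ => f a) (Set.Ioc a b) volume from
      integrableOn_const (by rw [Real.volume_Ioc]; exact
      ENNReal.ofReal_ne_top)) hf, hconst]
  rw [h1]
  exact setIntegral_mono_on ((integrableOn_const (by rw [Real.volume_Ioc]; exact
      ENNReal.ofReal_ne_top)).sub hf) hφ measurableSet_Ioc hb

lemma integral_linear_Ioc (a : ℝ) {δ : ℝ} (hδ : 0 ≤ δ) (c : ℝ) :
    ∫ t in Set.Ioc a (a + δ), c * (t - a) = c * (δ ^ 2 / 2) := by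
  rw [← intervalIntegral.integral_of_le (by linarith)]
  rw [intervalIntegral.integral_const_mul]
  have : ∫ t in a..(a + δ), (t - a) = δ ^ 2 / 2 := by
    rw [intervalIntegral.integral_comp_sub_right (fun t => t) a]
    norm_num [integral_id]
  rw [this]

end Integration

lemma matIntegral_quad {ι : Type} [Fintype ι] (T : ℝ) (v : ℝ → ι → ℝ) (z : ι → ℝ)
    (hij : ∀ i j, IntegrableOn (fun t => v t i * v t j) (Set.Ioc 0 T) volume) :
    z ⬝ᵥ (matIntegral T (fun t => Matrix.vecMulVec (v t) (v t))).mulVec z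
      = ∫ t in Set.Ioc (0:ℝ) T, (v t ⬝ᵥ z) ^ 2 := by
  classical
  have hpt : ∀ t : ℝ, (v t ⬝ᵥ z) ^ 2 = ∑ i, ∑ j, z i * ((v t i * v t j) * z j) := by
    intro t
    rw [sq, dotProduct, Finset.sum_mul_sum]
    apply Finset.sum_congr rfl; intro i _
    apply Finset.sum_congr rfl; intro j _
    ring
  have hint1 : ∀ i j, IntegrableOn (fun t => z i * ((v t i * v t j) * z j))
      (Set.Ioc 0 T) volume := fun i j => ((hij i j).mul_const (z j)).const_mul (z i)
  calc z ⬝ᵥ (matIntegral T (fun t => Matrix.vecMulVec (v t) (v t))).mulVec z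
      = ∑ i, ∑ j, z i * ((∫ t in Set.Ioc (0:ℝ) T, v t i * v t j) * z j) := by
        simp only [dotProduct, Matrix.mulVec, matIntegral, Matrix.of_apply, dotProduct,
          Matrix.vecMulVec_apply, Finset.mul_sum]
    _ = ∑ i, ∑ j, ∫ t in Set.Ioc (0:ℝ) T, z i * ((v t i * v t j) * z j) := by
        apply Finset.sum_congr rfl; intro i _
        apply Finset.sum_congr rfl; intro j _
        rw [← integral_mul_const, ← integral_const_mul]
    _ = ∫ t in Set.Ioc (0:ℝ) T, ∑ i, ∑ j, z i * ((v t i * v t j) * z j) := by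
        rw [integral_finset_sum _ (fun i _ => integrable_finset_sum _ (fun j _ => hint1 i j))]
        apply Finset.sum_congr rfl; intro i _
        rw [integral_finset_sum _ (fun j _ => hint1 i j)]
    _ = ∫ t in Set.Ioc (0:ℝ) T, (v t ⬝ᵥ z) ^ 2 := by
        apply integral_congr_ae
        filter_upwards with t
        rw [hpt]

section Step1
variable {ι : Type} [Fintype ι] [DecidableEq ι]

lemma opNorm_sub_comm (Ma Mb : Matrix ι ι ℝ) : opNorm (Ma - Mb) = opNorm (Mb - Ma) := by
  unfold opNorm
  rw [← neg_sub, map_neg, map_neg, norm_neg]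

lemma stepM {T δ L : ℝ} (hδ : 0 < δ) (hL : 0 ≤ L) {N : ℕ} (hN : 0 < N)
    (hTN : T = N * δ) {v : ℝ → ι → ℝ} (hv : SqLipschitz T L v) (z : ι → ℝ)
    (hint : IntegrableOn (fun t => (v t ⬝ᵥ z) ^ 2) (Set.Ioc 0 T) volume) :
    δ * ∑ k ∈ Finset.range N, (v ((k : ℕ) * δ) ⬝ᵥ z) ^ 2
      - ∫ t in Set.Ioc (0:ℝ) T, (v t ⬝ᵥ z) ^ 2 ≤ (δ * T * L / 2) * ∑ i, z i ^ 2 := by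
  classical
  set f : ℝ → ℝ := fun t => (v t ⬝ᵥ z) ^ 2 with hf
  set W : ℝ := ∑ i, z i ^ 2 with hW
  have hW0 : 0 ≤ W := Finset.sum_nonneg fun i _ => sq_nonneg _
  rw [integral_split hδ hTN hint, Finset.mul_sum, ← Finset.sum_sub_distrib]
  have hbd : ∀ k ∈ Finset.range N,
      δ * f ((k : ℝ) * δ) - (∫ t in Set.Ioc ((k : ℝ) * δ) (((k : ℝ) + 1) * δ), f t)
        ≤ L * W * (δ ^ 2 / 2) := by
    intro k hk
    rw [Finset.mem_range] at hk
    have hk0 : (0:ℝ) ≤ (k : ℝ) * δ := by positivity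
    have hk1 : ((k : ℝ) + 1) ≤ (N : ℝ) := by exact_mod_cast Nat.succ_le_of_lt hk
    have hkT : ((k : ℝ) + 1) * δ ≤ T := by rw [hTN]; nlinarith
    have hsub : Set.Ioc ((k : ℝ) * δ) (((k : ℝ) + 1) * δ) ⊆ Set.Ioc 0 T :=
      Set.Ioc_subset_Ioc hk0 hkT
    have hab : (k : ℝ) * δ ≤ ((k : ℝ) + 1) * δ := by nlinarith
    have heq : ((k : ℝ) + 1) * δ = (k : ℝ) * δ + δ := by ring
    have hφint : IntegrableOn (fun t => (L * W) * (t - (k : ℝ) * δ))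
        (Set.Ioc ((k : ℝ) * δ) (((k : ℝ) + 1) * δ)) volume :=
      ((continuous_const.mul (continuous_id.sub continuous_const)).integrableOn_Ioc)
    have hptw : ∀ t ∈ Set.Ioc ((k : ℝ) * δ) (((k : ℝ) + 1) * δ),
        f ((k : ℝ) * δ) - f t ≤ (L * W) * (t - (k : ℝ) * δ) := by
      intro t ht
      have htT : t ∈ Set.Icc (0:ℝ) T := ⟨hk0.trans ht.1.le, ht.2.trans hkT⟩
      have hkIcc : ((k : ℝ) * δ) ∈ Set.Icc (0:ℝ) T := ⟨hk0, le_trans (by nlinarith) hkT⟩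
      have h1 := sq_diff_le v z ((k : ℝ) * δ) t
      have h2 := hv _ hkIcc _ htT
      have habs : |(k : ℝ) * δ - t| = t - (k : ℝ) * δ := by
        rw [abs_sub_comm, abs_of_nonneg (by linarith [ht.1])]
      calc f ((k : ℝ) * δ) - f t ≤ opNorm (Matrix.vecMulVec (v ((k : ℝ) * δ)) (v ((k : ℝ) * δ))
            - Matrix.vecMulVec (v t) (v t)) * W := h1
        _ ≤ (L * |(k : ℝ) * δ - t|) * W := by gcongr
        _ = (L * W) * (t - (k : ℝ) * δ) := by rw [habs]; ring
    have := step_est hab (hint.mono_set hsub) hφint hptw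
    rw [heq] at this ⊢
    rw [integral_linear_Ioc _ hδ.le] at this
    have hba : ((k : ℝ) * δ + δ) - (k : ℝ) * δ = δ := by ring
    rw [hba] at this
    linarith
  calc ∑ k ∈ Finset.range N, (δ * f ((k : ℝ) * δ)
        - ∫ t in Set.Ioc ((k : ℝ) * δ) (((k : ℝ) + 1) * δ), f t)
      ≤ ∑ _k ∈ Finset.range N, L * W * (δ ^ 2 / 2) := Finset.sum_le_sum hbd
    _ = (N : ℝ) * (L * W * (δ ^ 2 / 2)) := by
        rw [Finset.sum_const, Finset.card_range, nsmul_eq_mul]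
    _ = (δ * T * L / 2) * W := by rw [hTN]; ring

end Step1

section Step1N
variable {ι : Type} [Fintype ι] [DecidableEq ι]

lemma stepN {T δ L : ℝ} (hδ : 0 < δ) (hL : 0 ≤ L) {N : ℕ} (hN : 0 < N)
    (hTN : T = N * δ) {v : ℝ → ι → ℝ} (hv : TotalSqVarLE T v (L * T / 2)) (z : ι → ℝ)
    (hint : IntegrableOn (fun t => (v t ⬝ᵥ z) ^ 2) (Set.Ioc 0 T) volume) :
    δ * ∑ k ∈ Finset.range N, (v ((k : ℕ) * δ) ⬝ᵥ z) ^ 2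
      - ∫ t in Set.Ioc (0:ℝ) T, (v t ⬝ᵥ z) ^ 2 ≤ (δ * T * L / 2) * ∑ i, z i ^ 2 := by
  classical
  set f : ℝ → ℝ := fun t => (v t ⬝ᵥ z) ^ 2 with hf
  set W : ℝ := ∑ i, z i ^ 2 with hW
  have hW0 : 0 ≤ W := Finset.sum_nonneg fun i _ => sq_nonneg _
  set g : ℕ → ℝ → ℝ := fun k t => opNorm (Matrix.vecMulVec (v t) (v t) -
    Matrix.vecMulVec (v ((k : ℝ) * δ)) (v ((k : ℝ) * δ))) with hg
  set S : ℕ → ℝ := fun k => sSup (g k '' Set.Icc ((k : ℝ) * δ) (((k : ℝ) + 1) * δ)) with hS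
  have hTpos : 0 < T := by rw [hTN]; positivity
  have hbddS : ∀ k : ℕ, k < N → BddAbove (g k '' Set.Icc ((k : ℝ) * δ) (((k : ℝ) + 1) * δ)) := by
    intro k hk
    refine ⟨L * T / 2, ?_⟩
    rintro b ⟨t, ht, rfl⟩
    have hk1 : ((k : ℝ) + 1) ≤ (N : ℝ) := by exact_mod_cast Nat.succ_le_of_lt hk
    exact g_le_of_tsv hv (by positivity) ht.1 (ht.2.trans (by rw [hTN]; nlinarith))
  rw [integral_split hδ hTN hint, Finset.mul_sum, ← Finset.sum_sub_distrib]
  have hbd : ∀ k ∈ Finset.range N,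
      δ * f ((k : ℝ) * δ) - (∫ t in Set.Ioc ((k : ℝ) * δ) (((k : ℝ) + 1) * δ), f t)
        ≤ δ * (S k * W) := by
    intro k hk
    rw [Finset.mem_range] at hk
    have hk0 : (0:ℝ) ≤ (k : ℝ) * δ := by positivity
    have hk1 : ((k : ℝ) + 1) ≤ (N : ℝ) := by exact_mod_cast Nat.succ_le_of_lt hk
    have hkT : ((k : ℝ) + 1) * δ ≤ T := by rw [hTN]; nlinarith
    have hsub : Set.Ioc ((k : ℝ) * δ) (((k : ℝ) + 1) * δ) ⊆ Set.Ioc 0 T :=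
      Set.Ioc_subset_Ioc hk0 hkT
    have hab : (k : ℝ) * δ ≤ ((k : ℝ) + 1) * δ := by nlinarith
    have hptw : ∀ t ∈ Set.Ioc ((k : ℝ) * δ) (((k : ℝ) + 1) * δ),
        f ((k : ℝ) * δ) - f t ≤ S k * W := by
      intro t ht
      have h1 := sq_diff_le v z ((k : ℝ) * δ) t
      have h2 : g k t ≤ S k := le_csSup (hbddS k hk)
        (Set.mem_image_of_mem _ ⟨ht.1.le, ht.2⟩)
      calc f ((k : ℝ) * δ) - f t ≤ opNorm (Matrix.vecMulVec (v ((k : ℝ) * δ)) (v ((k : ℝ) * δ))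
            - Matrix.vecMulVec (v t) (v t)) * W := h1
        _ = g k t * W := by rw [hg]; rw [opNorm_sub_comm]
        _ ≤ S k * W := by gcongr
    have := step_est hab (hint.mono_set hsub) (integrableOn_const (by
      rw [Real.volume_Ioc]; exact ENNReal.ofReal_ne_top)) hptw
    rw [setIntegral_const, Real.volume_real_Ioc_of_le hab,
      smul_eq_mul] at this
    have hba : (((k : ℝ) + 1) * δ) - (k : ℝ) * δ = δ := by ring
    rw [hba] at this
    linarith
  have hsup := sup_sum_le (ι := ι) hδ hN hTN hv
  calc ∑ k ∈ Finset.range N, (δ * f ((k : ℝ) * δ)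
        - ∫ t in Set.Ioc ((k : ℝ) * δ) (((k : ℝ) + 1) * δ), f t)
      ≤ ∑ k ∈ Finset.range N, δ * (S k * W) := Finset.sum_le_sum hbd
    _ = δ * W * ∑ k ∈ Finset.range N, S k := by
        rw [Finset.mul_sum]; apply Finset.sum_congr rfl; intro k _; ring
    _ ≤ δ * W * (L * T / 2) := by
        apply mul_le_mul_of_nonneg_left _ (by positivity)
        exact hsup
    _ = (δ * T * L / 2) * W := by ring

end Step1N

section Lp

lemma finiteIcc (T : ℝ) : IsFiniteMeasure (volume.restrict (Set.Icc (0:ℝ) T)) := by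
  constructor
  rw [Measure.restrict_apply_univ, Real.volume_Icc]
  exact ENNReal.ofReal_lt_top

lemma noise_memLp {n m : ℕ} {T : ℝ} (hT : 0 < T) {x xdot : ℝ → Fin n → ℝ} {u : ℝ → Fin m → ℝ}
    (hxdotL2 : MemLp xdot 2 (volume.restrict (Set.Icc (0:ℝ) T)))
    (huL2 : MemLp u 2 (volume.restrict (Set.Icc (0:ℝ) T)))
    (hAC : ∀ t ∈ Set.Icc (0:ℝ) T, ∀ i, x t i = x 0 i + ∫ s in (0:ℝ)..t, xdot s i)
    (A : Matrix (Fin n) (Fin n) ℝ) (B : Matrix (Fin n) (Fin m) ℝ) :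
    MemLp (noiseSig xdot x u A B) 2 (volume.restrict (Set.Icc (0:ℝ) T)) := by
  haveI := finiteIcc T
  -- integrability of xdot components
  have hxdot1 : Integrable xdot (volume.restrict (Set.Icc (0:ℝ) T)) :=
    memLp_one_iff_integrable.1 (hxdotL2.mono_exponent (by norm_num))
  have hcomp : ∀ i, IntervalIntegrable (fun s => xdot s i) volume 0 T := by
    intro i
    rw [intervalIntegrable_iff_integrableOn_Ioc_of_le hT.le]
    have : Integrable (fun s => xdot s i) (volume.restrict (Set.Icc (0:ℝ) T)) :=
      (ContinuousLinearMap.proj (R := ℝ) (φ := fun _ : Fin n => ℝ) i).comp_memLp'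
        (memLp_one_iff_integrable.2 hxdot1) |>.integrable le_rfl
    have h2 : IntegrableOn (fun s => xdot s i) (Set.Icc 0 T) volume := this
    exact h2.mono_set Set.Ioc_subset_Icc_self
  -- the continuous representative of x
  set g : ℝ → Fin n → ℝ := fun t i => x 0 i + ∫ s in (0:ℝ)..t, xdot s i with hgdef
  have hgc : ContinuousOn g (Set.Icc (0:ℝ) T) := by
    rw [continuousOn_pi]
    intro i
    apply continuousOn_const.add
    have := intervalIntegral.continuousOn_primitive_interval' (hcomp i)
      (by rw [Set.uIcc_of_le hT.le]; exact Set.left_mem_Icc.2 hT.le)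
    rwa [Set.uIcc_of_le hT.le] at this
  have hgm : AEStronglyMeasurable g (volume.restrict (Set.Icc (0:ℝ) T)) :=
    hgc.aestronglyMeasurable measurableSet_Icc
  obtain ⟨C, hC⟩ := isCompact_Icc.exists_bound_of_continuousOn hgc
  have hg2 : MemLp g 2 (volume.restrict (Set.Icc (0:ℝ) T)) :=
    MemLp.of_bound hgm C (by
      filter_upwards [ae_restrict_mem measurableSet_Icc] with t ht using hC t ht)
  have hxg : g =ᵐ[volume.restrict (Set.Icc (0:ℝ) T)] x := by
    filter_upwards [ae_restrict_mem measurableSet_Icc] with t ht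
    funext i
    exact (hAC t ht i).symm
  have hx2 : MemLp x 2 (volume.restrict (Set.Icc (0:ℝ) T)) := hg2.ae_eq hxg
  have hAx : MemLp (fun t => A.mulVec (x t)) 2 (volume.restrict (Set.Icc (0:ℝ) T)) :=
    (LinearMap.toContinuousLinearMap A.mulVecLin).comp_memLp' hx2
  have hBu : MemLp (fun t => B.mulVec (u t)) 2 (volume.restrict (Set.Icc (0:ℝ) T)) :=
    (LinearMap.toContinuousLinearMap B.mulVecLin).comp_memLp' huL2
  exact (hxdotL2.sub hAx).sub hBu

/-- products of components of an L² vector signal are integrable on subintervals. -/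
lemma prod_integrableOn {n : ℕ} {T : ℝ} {v : ℝ → Fin n → ℝ}
    (hv : MemLp v 2 (volume.restrict (Set.Icc (0:ℝ) T))) (i j : Fin n) :
    IntegrableOn (fun t => v t i * v t j) (Set.Ioc 0 T) volume := by
  have hi : MemLp (fun t => v t i) 2 (volume.restrict (Set.Icc (0:ℝ) T)) :=
    (ContinuousLinearMap.proj (R := ℝ) (φ := fun _ : Fin n => ℝ) i).comp_memLp' hv
  have hj : MemLp (fun t => v t j) 2 (volume.restrict (Set.Icc (0:ℝ) T)) :=
    (ContinuousLinearMap.proj (R := ℝ) (φ := fun _ : Fin n => ℝ) j).comp_memLp' hv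
  have : MemLp ((fun t => v t i) • (fun t => v t j)) 1
      (volume.restrict (Set.Icc (0:ℝ) T)) :=
    hj.smul hi
  have h1 : Integrable (fun t => v t i * v t j) (volume.restrict (Set.Icc (0:ℝ) T)) :=
    memLp_one_iff_integrable.1 this
  have h2 : IntegrableOn (fun t => v t i * v t j) (Set.Icc 0 T) volume := h1
  exact h2.mono_set Set.Ioc_subset_Icc_self

lemma dot_sq_integrableOn {n : ℕ} {T : ℝ} {v : ℝ → Fin n → ℝ}
    (hv : MemLp v 2 (volume.restrict (Set.Icc (0:ℝ) T))) (z : Fin n → ℝ) :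
    IntegrableOn (fun t => (v t ⬝ᵥ z) ^ 2) (Set.Ioc 0 T) volume := by
  have : ∀ t, (v t ⬝ᵥ z) ^ 2 = ∑ i, ∑ j, z i * ((v t i * v t j) * z j) := by
    intro t
    rw [sq, dotProduct, Finset.sum_mul_sum]
    exact Finset.sum_congr rfl fun i _ => Finset.sum_congr rfl fun j _ => by ring
  simp only [this]
  exact integrable_finset_sum _ fun i _ => integrable_finset_sum _ fun j _ =>
    ((prod_integrableOn hv i j).mul_const (z j)).const_mul (z i)

end Lp

section Alg
variable {n m : ℕ}

lemma xi_dot (xdot x : ℝ → Fin n → ℝ) (u : ℝ → Fin m → ℝ)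
    (A : Matrix (Fin n) (Fin n) ℝ) (B : Matrix (Fin n) (Fin m) ℝ) (z : Fin n → ℝ) (t : ℝ) :
    xiSig xdot x u t ⬝ᵥ Sum.elim z (Sum.elim (Aᵀ *ᵥ z) (Bᵀ *ᵥ z))
      = noiseSig xdot x u A B t ⬝ᵥ z := by
  rw [xiSig, sumElim_dotProduct_sumElim, sumElim_dotProduct_sumElim]
  rw [noiseSig]
  simp only [Pi.sub_apply, sub_dotProduct]
  have h1 : (fun i => -(x t i)) ⬝ᵥ (Aᵀ *ᵥ z) = -((A *ᵥ x t) ⬝ᵥ z) := by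
    rw [show (fun i => -(x t i)) = -(x t) from rfl, neg_dotProduct, dotProduct_mulVec,
      vecMul_transpose, neg_inj, dotProduct_comm]
  have h2 : (fun j => -(u t j)) ⬝ᵥ (Bᵀ *ᵥ z) = -((B *ᵥ u t) ⬝ᵥ z) := by
    rw [show (fun j => -(u t j)) = -(u t) from rfl, neg_dotProduct, dotProduct_mulVec,
      vecMul_transpose, neg_inj, dotProduct_comm]
  rw [h1, h2]
  ring

lemma lmi_quad (Q P : Matrix (Fin n) (Fin n) ℝ) (K : Matrix (Fin m) (Fin n) ℝ) (β : ℝ)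
    (A : Matrix (Fin n) (Fin n) ℝ) (B : Matrix (Fin n) (Fin m) ℝ) (z : Fin n → ℝ) :
    Sum.elim z (Sum.elim (Aᵀ *ᵥ z) (Bᵀ *ᵥ z)) ⬝ᵥ
        (lmiBlock Q P K β *ᵥ Sum.elim z (Sum.elim (Aᵀ *ᵥ z) (Bᵀ *ᵥ z)))
      = z ⬝ᵥ ((Q + β • (1 : Matrix (Fin n) (Fin n) ℝ)) *ᵥ z)
        + z ⬝ᵥ (((A + B * K) * P + P * (A + B * K)ᵀ) *ᵥ z) := by
  rw [lmiBlock, Matrix.fromBlocks_mulVec]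
  simp only [Sum.elim_comp_inl, Sum.elim_comp_inr]
  rw [sumElim_dotProduct_sumElim]
  have hR : (Matrix.of fun i jj => Sum.elim (fun j => P i j) (fun j => (P * Kᵀ) i j) jj)
      *ᵥ Sum.elim (Aᵀ *ᵥ z) (Bᵀ *ᵥ z) = P *ᵥ (Aᵀ *ᵥ z) + (P * Kᵀ) *ᵥ (Bᵀ *ᵥ z) := by
    funext i
    simp only [Matrix.mulVec, dotProduct, Matrix.of_apply, Fintype.sum_sum_type,
      Sum.elim_inl, Sum.elim_inr, Pi.add_apply]
  have hC : (Matrix.of fun ii j => Sum.elim (fun i => P i j) (fun k => (K * P) k j) ii)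
      *ᵥ z = Sum.elim (P *ᵥ z) ((K * P) *ᵥ z) := by
    funext ii
    rcases ii with i | k
    · simp only [Matrix.mulVec, dotProduct, Matrix.of_apply, Sum.elim_inl]
    · simp only [Matrix.mulVec, dotProduct, Matrix.of_apply, Sum.elim_inr]
  rw [hR, hC]
  rw [Matrix.zero_mulVec, add_zero, sumElim_dotProduct_sumElim]
  have e1 : z ⬝ᵥ (P *ᵥ (Aᵀ *ᵥ z)) = z ⬝ᵥ ((P * Aᵀ) *ᵥ z) := by rw [Matrix.mulVec_mulVec]
  have e2 : z ⬝ᵥ ((P * Kᵀ) *ᵥ (Bᵀ *ᵥ z)) = z ⬝ᵥ ((P * Kᵀ * Bᵀ) *ᵥ z) := by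
    rw [Matrix.mulVec_mulVec]
  have e3 : (Aᵀ *ᵥ z) ⬝ᵥ (P *ᵥ z) = z ⬝ᵥ ((A * P) *ᵥ z) := by
    rw [mulVec_transpose, ← dotProduct_mulVec, Matrix.mulVec_mulVec]
  have e4 : (Bᵀ *ᵥ z) ⬝ᵥ ((K * P) *ᵥ z) = z ⬝ᵥ ((B * (K * P)) *ᵥ z) := by
    rw [mulVec_transpose, ← dotProduct_mulVec, Matrix.mulVec_mulVec]
  rw [dotProduct_add z ((Q + β • 1) *ᵥ z) (P *ᵥ (Aᵀ *ᵥ z) + (P * Kᵀ) *ᵥ (Bᵀ *ᵥ z)),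
    dotProduct_add z (P *ᵥ (Aᵀ *ᵥ z)) ((P * Kᵀ) *ᵥ (Bᵀ *ᵥ z)), e1, e2, e3, e4]
  have hexp : (A + B * K) * P + P * (A + B * K)ᵀ
      = (A * P + B * (K * P)) + (P * Aᵀ + P * Kᵀ * Bᵀ) := by
    rw [Matrix.transpose_add, Matrix.transpose_mul]
    rw [Matrix.add_mul, Matrix.mul_add, Matrix.mul_assoc B K P, Matrix.mul_assoc P Kᵀ Bᵀ]
  rw [hexp]
  simp only [Matrix.add_mulVec, dotProduct_add]
  ring

end Alg

section Core

lemma core {n m : ℕ} {T δ L β : ℝ} {N : ℕ} (hδ : 0 < δ) (hL : 0 ≤ L) (hT : 0 < T)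
    (hβ : δ * T * L / 2 < β)
    {xdot x : ℝ → Fin n → ℝ} {u : ℝ → Fin m → ℝ}
    {Q P : Matrix (Fin n) (Fin n) ℝ} {K : Matrix (Fin m) (Fin n) ℝ}
    (hP : P.PosDef) (hlmi : SampLMI δ N xdot x u Q P K β)
    {A : Matrix (Fin n) (Fin n) ℝ} {B : Matrix (Fin n) (Fin m) ℝ}
    (hmem : (A, B) ∈ SigmaCont T xdot x u Q)
    (hnoise2 : MemLp (noiseSig xdot x u A B) 2 (volume.restrict (Set.Icc (0:ℝ) T)))
    (hstep : ∀ z : Fin n → ℝ,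
      δ * ∑ k ∈ Finset.range N, ((noiseSig xdot x u A B) ((k : ℕ) * δ) ⬝ᵥ z) ^ 2
        - ∫ t in Set.Ioc (0:ℝ) T, ((noiseSig xdot x u A B) t ⬝ᵥ z) ^ 2
        ≤ (δ * T * L / 2) * ∑ i, z i ^ 2) :
    negDefQ ((A + B * K) * P + P * (A + B * K)ᵀ) := by
  classical
  set v : ℝ → Fin n → ℝ := noiseSig xdot x u A B with hv
  set S : Matrix (Fin n) (Fin n) ℝ := (A + B * K) * P + P * (A + B * K)ᵀ with hSdef
  have hPt : Pᵀ = P := by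
    have := hP.1.eq
    rwa [Matrix.conjTranspose_eq_transpose_of_trivial] at this
  have hSh : (-S).IsHermitian := by
    show (-S)ᴴ = -S
    rw [Matrix.conjTranspose_eq_transpose_of_trivial, Matrix.transpose_neg, neg_inj, hSdef,
      Matrix.transpose_add, Matrix.transpose_mul, Matrix.transpose_mul,
      Matrix.transpose_transpose, hPt, add_comm]
  refine Matrix.posDef_iff_dotProduct_mulVec.2 ⟨hSh, ?_⟩
  intro z hz
  have hstarz : star z = z := funext fun i => star_trivial _
  set w : (Fin n ⊕ (Fin n ⊕ Fin m)) → ℝ := Sum.elim z (Sum.elim (Aᵀ *ᵥ z) (Bᵀ *ᵥ z)) with hw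
  have hstarw : star w = w := funext fun i => star_trivial _
  have h1 := (Matrix.posSemidef_iff_dotProduct_mulVec.1 hlmi).2 w
  rw [hstarw, Matrix.sub_mulVec, dotProduct_sub] at h1
  have h2 : w ⬝ᵥ sampledGram δ N (xiSig xdot x u) *ᵥ w
      = δ * ∑ k ∈ Finset.range N, (v ((k : ℕ) * δ) ⬝ᵥ z) ^ 2 := by
    rw [hw, gram_quad]
    congr 1
    exact Finset.sum_congr rfl fun k _ => by rw [xi_dot]
  have h3 := lmi_quad Q P K β A B z
  have hW : 0 < ∑ i, z i ^ 2 := by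
    obtain ⟨i, hi⟩ := Function.ne_iff.1 hz
    exact Finset.sum_pos' (fun j _ => sq_nonneg _) ⟨i, Finset.mem_univ i, lt_of_le_of_ne (sq_nonneg _) (Ne.symm (pow_ne_zero 2 hi))⟩
  have hprod := prod_integrableOn hnoise2
  have h4 : z ⬝ᵥ (matIntegral T fun t => Matrix.vecMulVec (v t) (v t)) *ᵥ z
      = ∫ t in Set.Ioc (0:ℝ) T, (v t ⬝ᵥ z) ^ 2 := matIntegral_quad T v z hprod
  have h5 := hstep z
  have hQle : ∫ t in Set.Ioc (0:ℝ) T, (v t ⬝ᵥ z) ^ 2 ≤ z ⬝ᵥ Q *ᵥ z := by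
    have := (Matrix.posSemidef_iff_dotProduct_mulVec.1 hmem).2 z
    rw [hstarz, Matrix.sub_mulVec, dotProduct_sub] at this
    rw [← h4]
    linarith
  have h6 : z ⬝ᵥ (Q + β • (1 : Matrix (Fin n) (Fin n) ℝ)) *ᵥ z
      = z ⬝ᵥ Q *ᵥ z + β * ∑ i, z i ^ 2 := by
    rw [Matrix.add_mulVec, dotProduct_add, Matrix.smul_mulVec, dotProduct_smul,
      Matrix.one_mulVec, smul_eq_mul]
    congr 1
    simp [dotProduct, sq]
  have hβW : (δ * T * L / 2) * ∑ i, z i ^ 2 < β * ∑ i, z i ^ 2 :=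
    mul_lt_mul_of_pos_right hβ hW
  rw [hstarz, Matrix.neg_mulVec, dotProduct_neg]
  have hfin : z ⬝ᵥ S *ᵥ z < 0 := by
    rw [h2] at h1
    rw [h3, h6] at h1
    linarith
  linarith

end Core

theorem stmt11
    {n m : ℕ} (T : ℝ) (hT : 0 < T)
    (x xdot : ℝ → Fin n → ℝ) (u : ℝ → Fin m → ℝ)
    (Q : Matrix (Fin n) (Fin n) ℝ) (hQ : Q.PosSemidef)
    (hxdotL2 : MeasureTheory.MemLp xdot 2 (MeasureTheory.volume.restrict (Set.Icc (0:ℝ) T)))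
    (huL2 : MeasureTheory.MemLp u 2 (MeasureTheory.volume.restrict (Set.Icc (0:ℝ) T)))
    (hAC : ∀ t ∈ Set.Icc (0:ℝ) T, ∀ i, x t i = x 0 i + ∫ s in (0:ℝ)..t, xdot s i)
    (As : Matrix (Fin n) (Fin n) ℝ) (Bs : Matrix (Fin n) (Fin m) ℝ)
    (htrue : (As, Bs) ∈ SigmaCont T xdot x u Q)
    (δ : ℝ) (hδ : 0 < δ) (N : ℕ) (hN : 0 < N) (hTN : T = N * δ)
    (L : ℝ) (hL : 0 ≤ L)
    (K : Matrix (Fin m) (Fin n) ℝ) (P : Matrix (Fin n) (Fin n) ℝ) (β : ℝ)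
    (hP : P.PosDef) (hβ : δ * T * L / 2 < β)
    (hlmi : SampLMI δ N xdot x u Q P K β) :
    (∀ AB ∈ SigmaCont T xdot x u Q ∩ Mset T L xdot x u, negDefQ ((AB.1 + AB.2 * K) * P + P * (AB.1 + AB.2 * K).transpose)) ∧
    (∀ AB ∈ SigmaCont T xdot x u Q ∩ Nset T L xdot x u, negDefQ ((AB.1 + AB.2 * K) * P + P * (AB.1 + AB.2 * K).transpose)) := by
  constructor
  · rintro ⟨A, B⟩ ⟨hmemS, hmemM⟩
    have hnoise2 := noise_memLp hT hxdotL2 huL2 hAC A B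
    exact core hδ hL hT hβ hP hlmi hmemS hnoise2
      (fun z => stepM hδ hL hN hTN hmemM z (dot_sq_integrableOn hnoise2 z))
  · rintro ⟨A, B⟩ ⟨hmemS, hmemN⟩
    have hnoise2 := noise_memLp hT hxdotL2 huL2 hAC A B
    exact core hδ hL hT hβ hP hlmi hmemS hnoise2
      (fun z => stepN hδ hL hN hTN hmemN z (dot_sq_integrableOn hnoise2 z))
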